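/- Let l ≥ 1 be an integer and r, z > 0. Then there exists a constant C > 0 such that for every s ∈ (0, 1/2], the integral of e^{2 r Y_l} over the set { Y = (Y₁, …, Y_l) ∈ ℝ^l : Y_l ≥ 0, (r + z) Y_l ≤ log(1/s), |Y| ≤ (1/z) log(1/s) } with respect to Lebesgue measure on ℝ^l is at most C s^{−2r/(z+r)} ( log(1/s) )^{l}. -/

import Mathlib

open MeasureTheory

/-- The Euclidean integral estimate in the proof of Lemma 4.3: for `r, z > 0` there is
`C > 0` such that for all `0 < s ≤ 1/2`,
`∫ e^{2 r Y_l} dY` over `{Y ∈ ℝ^l : Y_l ≥ 0, (r+z) Y_l ≤ log(1/s), |Y| ≤ (1/z) log(1/s)}`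
is at most `C s^{−2r/(z+r)} (log(1/s))^l`. -/
theorem weyl_chamber_integral_bound (l : ℕ) (hl : 1 ≤ l) (r z : ℝ) (hr : 0 < r)
    (hz : 0 < z) :
    ∃ C : ℝ, 0 < C ∧ ∀ s : ℝ, 0 < s → s ≤ 1 / 2 →
      (∫⁻ Y in {Y : EuclideanSpace ℝ (Fin l) |
            0 ≤ Y ⟨l - 1, by omega⟩ ∧
            (r + z) * Y ⟨l - 1, by omega⟩ ≤ Real.log (1 / s) ∧
            ‖Y‖ ≤ (1 / z) * Real.log (1 / s)},
          ENNReal.ofReal (Real.exp (2 * r * Y ⟨l - 1, by omega⟩))) ≤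
        ENNReal.ofReal (C * s ^ (-(2 * r) / (z + r)) * Real.log (1 / s) ^ l) := by
  set B : ℝ := (volume (Metric.ball (0 : EuclideanSpace ℝ (Fin l)) 1)).toReal with hBdef
  have hBfin : volume (Metric.ball (0 : EuclideanSpace ℝ (Fin l)) 1) ≠ ⊤ :=
    (lt_of_le_of_lt (measure_mono Metric.ball_subset_closedBall)
      (IsCompact.measure_lt_top (isCompact_closedBall 0 1))).ne
  have hBpos : 0 < B :=
    ENNReal.toReal_pos (Metric.measure_ball_pos volume 0 one_pos).ne' hBfin
  refine ⟨B * (1 / z) ^ l, by positivity, ?_⟩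
  intro s hs hs2
  set L := Real.log (1 / s) with hLdef
  have hL0 : 0 < L := Real.log_pos (by rw [lt_div_iff₀ hs]; linarith)
  set S : Set (EuclideanSpace ℝ (Fin l)) :=
    {Y : EuclideanSpace ℝ (Fin l) |
            0 ≤ Y ⟨l - 1, by omega⟩ ∧
            (r + z) * Y ⟨l - 1, by omega⟩ ≤ L ∧
            ‖Y‖ ≤ (1 / z) * L} with hSdef
  have hsub : S ⊆ Metric.closedBall 0 (L / z) := by
    intro Y hY
    obtain ⟨-, -, h3⟩ := hY
    rw [Metric.mem_closedBall, dist_zero_right]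
    calc ‖Y‖ ≤ (1 / z) * L := h3
    _ = L / z := by ring
  have hrz : 0 < r + z := by linarith
  have step1 : (∫⁻ Y in S, ENNReal.ofReal (Real.exp (2 * r * Y ⟨l - 1, by omega⟩))) ≤
      ENNReal.ofReal (Real.exp (2 * r * (L / (r + z)))) * volume S := by
    rw [← setLIntegral_const S (ENNReal.ofReal (Real.exp (2 * r * (L / (r + z)))))]
    refine setLIntegral_mono measurable_const ?_
    intro Y hY
    obtain ⟨-, h2, -⟩ := hY
    refine ENNReal.ofReal_le_ofReal (Real.exp_le_exp.2 ?_)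
    have hYl : Y ⟨l - 1, by omega⟩ ≤ L / (r + z) := (le_div_iff₀' hrz).2 h2
    nlinarith
  have hvol : volume S ≤ ENNReal.ofReal ((L / z) ^ l) * ENNReal.ofReal B := by
    calc volume S ≤ volume (Metric.closedBall (0 : EuclideanSpace ℝ (Fin l)) (L / z)) :=
          measure_mono hsub
    _ = ENNReal.ofReal ((L / z) ^ Module.finrank ℝ (EuclideanSpace ℝ (Fin l))) *
          volume (Metric.ball (0 : EuclideanSpace ℝ (Fin l)) 1) :=
          Measure.addHaar_closedBall _ _ (by positivity)
    _ = ENNReal.ofReal ((L / z) ^ l) * ENNReal.ofReal B := by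
          rw [finrank_euclideanSpace_fin, ENNReal.ofReal_toReal hBfin]
  have key : Real.exp (2 * r * (L / (r + z))) * ((L / z) ^ l * B) =
      B * (1 / z) ^ l * s ^ (-(2 * r) / (z + r)) * L ^ l := by
    have hexp : Real.exp (2 * r * (L / (r + z))) = s ^ (-(2 * r) / (z + r)) := by
      rw [Real.rpow_def_of_pos hs, hLdef, one_div, Real.log_inv]
      congr 1
      field_simp
      ring
    rw [hexp, div_pow]
    field_simp
    ring_nf
    rw [← mul_pow, mul_inv_cancel₀ hz.ne', one_pow]
  calc (∫⁻ Y in S, ENNReal.ofReal (Real.exp (2 * r * Y ⟨l - 1, by omega⟩)))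
      ≤ ENNReal.ofReal (Real.exp (2 * r * (L / (r + z)))) * volume S := step1
    _ ≤ ENNReal.ofReal (Real.exp (2 * r * (L / (r + z)))) *
          (ENNReal.ofReal ((L / z) ^ l) * ENNReal.ofReal B) := by
          exact mul_le_mul_right hvol _
    _ = ENNReal.ofReal (Real.exp (2 * r * (L / (r + z))) * ((L / z) ^ l * B)) := by
          rw [← ENNReal.ofReal_mul (by positivity), ← ENNReal.ofReal_mul (by positivity)]
    _ = ENNReal.ofReal (B * (1 / z) ^ l * s ^ (-(2 * r) / (z + r)) * L ^ l) := by rw [key]
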